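/- Let (P,s,v) be an α-signed differential poset. Then for every integer k ≥ 0 the following identities hold in K̂P: D^{4k+1}𝐏 = (U^{4k} − U^{4k+1})𝐏; D^{4k+2}𝐏 = −U^{4k+2}𝐏; D^{4k+3}𝐏 = (−U^{4k+2} + U^{4k+3})𝐏; D^{4k+4}𝐏 = U^{4k+4}𝐏. -/
import Mathlib


open scoped Classical

namespace SDP

variable {P : Type*} [PartialOrder P] [OrderBot P]

/-- The sign of a saturated chain, recorded as a list: the product of the
edge signs `s` over consecutive pairs. -/
def chainSign {α : Type*} (s : α → α → ℤ) : List α → ℤ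
  | [] => 1
  | [_] => 1
  | x :: y :: rest => s x y * chainSign s (y :: rest)

/-- Maximal chains from `⊥` to `x`: lists whose consecutive entries are covers,
starting at `⊥` and ending at `x`. -/
def chainsTo (x : P) : Set (List P) :=
  {l : List P | l.Chain' (· ⋖ ·) ∧ l.head? = some (⊥ : P) ∧ l.getLast? = some x}

/-- `e(x)`: the signed sum of maximal chains from `⊥` to `x`. -/
noncomputable def e (s : P → P → ℤ) (x : P) : ℤ :=
  ∑ᶠ l ∈ chainsTo x, chainSign s l

variable (K : Type*) [Field K]

/-- The up operator on `K̂P`, written coefficientwise: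
`(U f)(y) = ∑_{x ⋖ y} s(x ⋖ y) f(x)`. -/
noncomputable def Uop (s : P → P → ℤ) (f : P → K) : P → K :=
  fun y => ∑ᶠ x ∈ {x : P | x ⋖ y}, (s x y : K) * f x

/-- The down operator on `K̂P`, written coefficientwise:
`(D f)(x) = ∑_{y ⋗ x} s(x ⋖ y) v(y) v(x) f(y)`. -/
noncomputable def Dop (s : P → P → ℤ) (v : P → ℤ) (f : P → K) : P → K :=
  fun x => ∑ᶠ y ∈ {y : P | x ⋖ y}, (s x y : K) * (v y : K) * (v x : K) * f y

variable [GradeMinOrder ℕ P]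

/-- `(P, s, v)` is a signed poset: edge labels and vertex labels are signs, and
each rank of the graded poset `P` is finite. -/
def IsSignedPoset (s : P → P → ℤ) (v : P → ℤ) : Prop :=
  (∀ x y : P, x ⋖ y → s x y = 1 ∨ s x y = -1) ∧
  (∀ x : P, v x = 1 ∨ v x = -1) ∧
  (∀ n : ℕ, {x : P | grade ℕ x = n}.Finite)

/-- Weakly signed differential: `v(0̂) = 1` and `UD + DU = I` on `K̂P`. -/
def WeaklySignedDifferential (s : P → P → ℤ) (v : P → ℤ) : Prop :=
  v ⊥ = 1 ∧ ∀ f : P → K, Uop K s (Dop K s v f) + Dop K s v (Uop K s f) = f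

/-- α-signed differential: weakly signed differential and `(U + D)𝐏 = 𝐏`. -/
def AlphaSignedDifferential (s : P → P → ℤ) (v : P → ℤ) : Prop :=
  WeaklySignedDifferential K s v ∧
    Uop K s (fun _ => 1) + Dop K s v (fun _ => 1) = (fun _ => (1 : K))

/-- β-signed differential: weakly signed differential and `(D - U)𝐏 = 𝐏`. -/
def BetaSignedDifferential (s : P → P → ℤ) (v : P → ℤ) : Prop :=
  WeaklySignedDifferential K s v ∧
    Dop K s v (fun _ => 1) - Uop K s (fun _ => 1) = (fun _ => (1 : K))

end SDP

section Aux

variable {P : Type*} [PartialOrder P] [OrderBot P] [GradeMinOrder ℕ P]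
variable (K : Type*) [Field K]

lemma aux_fin_above (hsp : ∀ n : ℕ, {x : P | grade ℕ x = n}.Finite) (x : P) :
    {y : P | x ⋖ y}.Finite := by
  apply (hsp (grade ℕ x + 1)).subset
  intro y hy
  have h := (CovBy.grade ℕ hy)
  have := Order.covBy_iff_add_one_eq.mp h
  simpa using this.symm

lemma aux_fin_below (hsp : ∀ n : ℕ, {x : P | grade ℕ x = n}.Finite) (y : P) :
    {x : P | x ⋖ y}.Finite := by
  apply (hsp (grade ℕ y - 1)).subset
  intro x hx
  have h := (CovBy.grade ℕ hx)
  have := Order.covBy_iff_add_one_eq.mp h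
  simp only [Set.mem_setOf_eq]
  omega

lemma aux_Uop_sub (s : P → P → ℤ)
    (hsp : ∀ n : ℕ, {x : P | grade ℕ x = n}.Finite) (f g : P → K) :
    SDP.Uop K s (f - g) = SDP.Uop K s f - SDP.Uop K s g := by
  funext y
  simp only [SDP.Uop, Pi.sub_apply]
  rw [← finsum_mem_sub_distrib _ _ (aux_fin_below hsp y)]
  apply finsum_mem_congr rfl
  intro x _
  ring

lemma aux_Uop_neg (s : P → P → ℤ)
    (hsp : ∀ n : ℕ, {x : P | grade ℕ x = n}.Finite) (f : P → K) :
    SDP.Uop K s (-f) = - SDP.Uop K s f := by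
  funext y
  simp only [SDP.Uop, Pi.neg_apply]
  rw [← finsum_mem_neg_distrib _ (aux_fin_below hsp y)]
  apply finsum_mem_congr rfl
  intro x _
  ring

lemma aux_Uop_add (s : P → P → ℤ)
    (hsp : ∀ n : ℕ, {x : P | grade ℕ x = n}.Finite) (f g : P → K) :
    SDP.Uop K s (f + g) = SDP.Uop K s f + SDP.Uop K s g := by
  funext y
  simp only [SDP.Uop, Pi.add_apply]
  rw [← finsum_mem_add_distrib (aux_fin_below hsp y)]
  apply finsum_mem_congr rfl
  intro x _
  ring

lemma aux_Dop_sub (s : P → P → ℤ) (v : P → ℤ)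
    (hsp : ∀ n : ℕ, {x : P | grade ℕ x = n}.Finite) (f g : P → K) :
    SDP.Dop K s v (f - g) = SDP.Dop K s v f - SDP.Dop K s v g := by
  funext x
  simp only [SDP.Dop, Pi.sub_apply]
  rw [← finsum_mem_sub_distrib _ _ (aux_fin_above hsp x)]
  apply finsum_mem_congr rfl
  intro y _
  ring

lemma aux_Dop_neg (s : P → P → ℤ) (v : P → ℤ)
    (hsp : ∀ n : ℕ, {x : P | grade ℕ x = n}.Finite) (f : P → K) :
    SDP.Dop K s v (-f) = - SDP.Dop K s v f := by
  funext x
  simp only [SDP.Dop, Pi.neg_apply]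
  rw [← finsum_mem_neg_distrib _ (aux_fin_above hsp x)]
  apply finsum_mem_congr rfl
  intro y _
  ring

lemma aux_Dop_add (s : P → P → ℤ) (v : P → ℤ)
    (hsp : ∀ n : ℕ, {x : P | grade ℕ x = n}.Finite) (f g : P → K) :
    SDP.Dop K s v (f + g) = SDP.Dop K s v f + SDP.Dop K s v g := by
  funext x
  simp only [SDP.Dop, Pi.add_apply]
  rw [← finsum_mem_add_distrib (aux_fin_above hsp x)]
  apply finsum_mem_congr rfl
  intro y _
  ring

end Aux

/-- in an α-signed differential poset, for every `k ≥ 0`: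
`D^{4k+1}𝐏 = (U^{4k} − U^{4k+1})𝐏`, `D^{4k+2}𝐏 = −U^{4k+2}𝐏`,
`D^{4k+3}𝐏 = (−U^{4k+2} + U^{4k+3})𝐏`, `D^{4k+4}𝐏 = U^{4k+4}𝐏`. -/
theorem statement5 {P : Type*} [PartialOrder P] [OrderBot P] [GradeMinOrder ℕ P]
    (K : Type*) [Field K] [CharZero K]
    (s : P → P → ℤ) (v : P → ℤ)
    (hsp : SDP.IsSignedPoset s v)
    (halpha : SDP.AlphaSignedDifferential K s v)
    (k : ℕ) :
    ((SDP.Dop K s v)^[4 * k + 1] (fun _ => 1) =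
      (SDP.Uop K s)^[4 * k] (fun _ => 1) - (SDP.Uop K s)^[4 * k + 1] (fun _ => 1)) ∧
    ((SDP.Dop K s v)^[4 * k + 2] (fun _ => 1) =
      - (SDP.Uop K s)^[4 * k + 2] (fun _ => 1)) ∧
    ((SDP.Dop K s v)^[4 * k + 3] (fun _ => 1) =
      - (SDP.Uop K s)^[4 * k + 2] (fun _ => 1) + (SDP.Uop K s)^[4 * k + 3] (fun _ => 1)) ∧
    ((SDP.Dop K s v)^[4 * k + 4] (fun _ => 1) =
      (SDP.Uop K s)^[4 * k + 4] (fun _ => 1)) := by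
  obtain ⟨hs1, hv1, hfin⟩ := hsp
  obtain ⟨⟨hv, hcomm⟩, ha⟩ := halpha
  set D := SDP.Dop K s v with hDdef
  set U := SDP.Uop K s with hUdef
  set Pb : P → K := fun _ => 1 with hPbdef
  have hUsub : ∀ f g : P → K, U (f - g) = U f - U g := aux_Uop_sub K s hfin
  have hUneg : ∀ f : P → K, U (-f) = - U f := aux_Uop_neg K s hfin
  have hUadd : ∀ f g : P → K, U (f + g) = U f + U g := aux_Uop_add K s hfin
  have hDsub : ∀ f g : P → K, D (f - g) = D f - D g := aux_Dop_sub K s v hfin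
  have hDneg : ∀ f : P → K, D (-f) = - D f := aux_Dop_neg K s v hfin
  have hDadd : ∀ f g : P → K, D (f + g) = D f + D g := aux_Dop_add K s v hfin
  have hDU : ∀ f : P → K, D (U f) = f - U (D f) := by
    intro f
    have h := hcomm f
    have : U (D f) + D (U f) = f := h
    linear_combination (norm := abel) this
  have hP : D Pb = Pb - U Pb := by
    have : U Pb + D Pb = Pb := ha
    linear_combination (norm := abel) this
  -- E and O formulas
  have hEO : ∀ m : ℕ, (D (U^[2*m] Pb) = U^[2*m] Pb - U^[2*m+1] Pb) ∧
      (D (U^[2*m+1] Pb) = U^[2*m] Pb - U^[2*m+1] Pb + U^[2*m+2] Pb) := by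
    intro m
    induction m with
    | zero =>
      constructor
      · simpa using hP
      · have h1 : D (U^[2*0+1] Pb) = Pb - U (D Pb) := by
          rw [show 2*0+1 = 0+1 from by ring, Function.iterate_succ_apply']
          simpa using hDU Pb
        rw [h1, hP, hUsub]
        have e1 : U^[2*0] Pb = Pb := by simp
        have e2 : U^[2*0+1] Pb = U Pb := by simp
        have e3 : U^[2*0+2] Pb = U (U Pb) := by
          rw [show 2*0+2 = (0+1)+1 from by ring, Function.iterate_succ_apply',
            Function.iterate_succ_apply']
          simp
        rw [e1, e2, e3]
        abel
    | succ n ih =>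
      obtain ⟨ihE, ihO⟩ := ih
      have hc : ∀ a b : ℕ, a = b + 1 → U^[a] Pb = U (U^[b] Pb) := fun a b hab => by
        rw [hab, Function.iterate_succ_apply']
      have hEn : D (U^[2*(n+1)] Pb) = U^[2*(n+1)] Pb - U^[2*(n+1)+1] Pb := by
        rw [hc (2*(n+1)) (2*n+1) (by ring), hDU, ihO, hUadd, hUsub,
          hc (2*(n+1)+1) (2*n+2) (by ring),
          hc (2*n+2) (2*n+1) rfl, hc (2*n+1) (2*n) rfl]
        abel
      refine ⟨hEn, ?_⟩
      rw [hc (2*(n+1)+1) (2*(n+1)) rfl, hDU, hEn, hUsub,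
        hc (2*(n+1)+2) (2*(n+1)+1) rfl, hc (2*(n+1)+1) (2*(n+1)) rfl]
      abel
  have hE : ∀ m : ℕ, D (U^[2*m] Pb) = U^[2*m] Pb - U^[2*m+1] Pb := fun m => (hEO m).1
  have hO : ∀ m : ℕ, D (U^[2*m+1] Pb) = U^[2*m] Pb - U^[2*m+1] Pb + U^[2*m+2] Pb :=
    fun m => (hEO m).2
  -- the step lemma
  have hstep : ∀ j m : ℕ, D^[j] Pb = U^[2*m] Pb →
      (D^[j+1] Pb = U^[2*m] Pb - U^[2*m+1] Pb) ∧
      (D^[j+2] Pb = - U^[2*m+2] Pb) ∧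
      (D^[j+3] Pb = - U^[2*m+2] Pb + U^[2*m+3] Pb) ∧
      (D^[j+4] Pb = U^[2*m+4] Pb) := by
    intro j m hj
    have h1 : D^[j+1] Pb = U^[2*m] Pb - U^[2*m+1] Pb := by
      rw [Function.iterate_succ_apply', hj, hE m]
    have hEm1 : D (U^[2*m+2] Pb) = U^[2*m+2] Pb - U^[2*m+3] Pb := by
      have := hE (m+1)
      rw [show 2*(m+1) = 2*m+2 from by ring, show 2*m+2+1 = 2*m+3 from by ring] at this
      exact this
    have hOm1 : D (U^[2*m+3] Pb) = U^[2*m+2] Pb - U^[2*m+3] Pb + U^[2*m+4] Pb := by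
      have := hO (m+1)
      rw [show 2*(m+1) = 2*m+2 from by ring] at this
      rw [show 2*m+2+1 = 2*m+3 from by ring, show 2*m+2+2 = 2*m+4 from by ring] at this
      exact this
    have h2 : D^[j+2] Pb = - U^[2*m+2] Pb := by
      rw [show j+2 = (j+1)+1 from by ring, Function.iterate_succ_apply', h1, hDsub,
        hE m, hO m]
      abel
    have h3 : D^[j+3] Pb = - U^[2*m+2] Pb + U^[2*m+3] Pb := by
      rw [show j+3 = (j+2)+1 from by ring, Function.iterate_succ_apply', h2, hDneg,
        hEm1]
      abel
    have h4 : D^[j+4] Pb = U^[2*m+4] Pb := by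
      rw [show j+4 = (j+3)+1 from by ring, Function.iterate_succ_apply', h3, hDadd,
        hDneg, hEm1, hOm1]
      abel
    exact ⟨h1, h2, h3, h4⟩
  -- main induction on k
  induction k with
  | zero =>
    have h := hstep 0 0 (by simp)
    refine ⟨?_, ?_, ?_, ?_⟩ <;> · norm_num at h ⊢; tauto
  | succ n ih =>
    have hbase : D^[4*n+4] Pb = U^[2*(2*n+2)] Pb := by
      rw [show 2*(2*n+2) = 4*n+4 from by ring]
      exact ih.2.2.2
    have h := hstep (4*n+4) (2*n+2) hbase
    obtain ⟨h1, h2, h3, h4⟩ := h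
    have hiter : ∀ (f : (P → K) → (P → K)) (a b : ℕ), a = b → f^[a] Pb = f^[b] Pb :=
      fun f a b hab => by rw [hab]
    refine ⟨?_, ?_, ?_, ?_⟩
    · rw [hiter D (4*(n+1)+1) ((4*n+4)+1) (by ring), h1,
        hiter U (2*(2*n+2)) (4*(n+1)) (by ring),
        hiter U (2*(2*n+2)+1) (4*(n+1)+1) (by ring)]
    · rw [hiter D (4*(n+1)+2) ((4*n+4)+2) (by ring), h2,
        hiter U (2*(2*n+2)+2) (4*(n+1)+2) (by ring)]
    · rw [hiter D (4*(n+1)+3) ((4*n+4)+3) (by ring), h3,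
        hiter U (2*(2*n+2)+2) (4*(n+1)+2) (by ring),
        hiter U (2*(2*n+2)+3) (4*(n+1)+3) (by ring)]
    · rw [hiter D (4*(n+1)+4) ((4*n+4)+4) (by ring), h4,
        hiter U (2*(2*n+2)+4) (4*(n+1)+4) (by ring)]
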